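/- There exists τ₀ > 0 such that φ_τ(0) ≠ 0 for all τ ≥ τ₀, and η_τ(0)/φ_τ(0) + τ → 0 as τ → +∞; that is, η_τ(0)/φ_τ(0) = −τ + o(1) as τ → +∞. -/

import Mathlib

open Real MeasureTheory Filter intervalIntegral

private lemma phi_exp_bound (l : ℝ) (hl : 0 < l) (q : ℝ → ℝ) (hq : IntegrableOn q (Set.Icc 0 l))
    (φ : ℝ → ℝ) (τ : ℝ) (hτ1 : 1 ≤ τ) (hτQ : (∫ t in (0:ℝ)..l, |q t|) ≤ τ)
    (hφcont : ContinuousOn φ (Set.Icc 0 l))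
    (hφ : ∀ x ∈ Set.Icc 0 l, φ x = Real.sinh (τ * (x - l)) / τ -
        (1 / τ) * ∫ t in x..l, Real.sinh (τ * (x - t)) * q t * φ t) :
    ∀ x ∈ Set.Icc 0 l, |φ x| ≤ Real.exp (τ * (l - x)) / τ := by
  have hτ0 : (0:ℝ) < τ := lt_of_lt_of_le one_pos hτ1
  set Q : ℝ := ∫ t in (0:ℝ)..l, |q t| with hQdef
  have hqabs : IntervalIntegrable (fun t => |q t|) volume 0 l := by
    rw [intervalIntegrable_iff_integrableOn_Icc_of_le hl.le]; exact hq.abs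
  set g : ℝ → ℝ := fun x => τ * Real.exp (τ * (x - l)) * |φ x| with hgdef
  have hgc : ContinuousOn g (Set.Icc 0 l) :=
    ((continuous_const.mul (Real.continuous_exp.comp (by continuity))).continuousOn).mul hφcont.abs
  obtain ⟨x₀, hx₀, hmax⟩ := isCompact_Icc.exists_isMaxOn (Set.nonempty_Icc.mpr hl.le) hgc
  set S : ℝ := g x₀ with hSdef
  have hS0 : 0 ≤ S := mul_nonneg (mul_nonneg hτ0.le (Real.exp_pos _).le) (abs_nonneg _)
  have hφle : ∀ t ∈ Set.Icc (0:ℝ) l, |φ t| ≤ S / τ * Real.exp (τ * (l - t)) := by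
    intro t ht
    have h2 : τ * Real.exp (τ * (t - l)) * |φ t| ≤ S := hmax ht
    have h3 : Real.exp (τ * (t - l)) * Real.exp (τ * (l - t)) = 1 := by
      rw [← Real.exp_add, show τ * (t - l) + τ * (l - t) = 0 by ring, Real.exp_zero]
    have h4 : τ * |φ t| ≤ S * Real.exp (τ * (l - t)) := by
      have h5 := mul_le_mul_of_nonneg_right h2 (Real.exp_pos (τ * (l - t))).le
      calc τ * |φ t|
          = τ * Real.exp (τ * (t - l)) * |φ t| * Real.exp (τ * (l - t)) := by
            rw [show τ * Real.exp (τ * (t - l)) * |φ t| * Real.exp (τ * (l - t))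
              = τ * |φ t| * (Real.exp (τ * (t - l)) * Real.exp (τ * (l - t))) by ring, h3, mul_one]
        _ ≤ S * Real.exp (τ * (l - t)) := h5
    rw [div_mul_eq_mul_div, le_div_iff₀ hτ0]
    linarith
  have hx₀l : x₀ ≤ l := hx₀.2
  have hqabs' : IntervalIntegrable (fun t => |q t|) volume x₀ l := by
    rw [intervalIntegrable_iff_integrableOn_Icc_of_le hx₀l]
    exact (hq.mono_set (Set.Icc_subset_Icc hx₀.1 le_rfl)).abs
  have hQx : (∫ t in x₀..l, |q t|) ≤ Q :=
    intervalIntegral.integral_mono_interval hx₀.1 hx₀l le_rfl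
      (Filter.Eventually.of_forall fun t => abs_nonneg _) hqabs
  have hQx0 : (0:ℝ) ≤ ∫ t in x₀..l, |q t| :=
    intervalIntegral.integral_nonneg hx₀l fun t _ => abs_nonneg _
  have hIbnd : |∫ t in x₀..l, Real.sinh (τ * (x₀ - t)) * q t * φ t|
      ≤ S / (2 * τ) * Real.exp (τ * (l - x₀)) * Q := by
    have key : ‖∫ t in x₀..l, Real.sinh (τ * (x₀ - t)) * q t * φ t‖
        ≤ abs (∫ t in x₀..l, S / (2 * τ) * Real.exp (τ * (l - x₀)) * |q t|) := by
      apply intervalIntegral.norm_integral_le_abs_of_norm_le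
      · filter_upwards [ae_restrict_mem measurableSet_uIoc] with t ht
        rw [Set.uIoc_of_le hx₀l] at ht
        have htI : t ∈ Set.Icc (0:ℝ) l := ⟨le_trans hx₀.1 ht.1.le, ht.2⟩
        rw [Real.norm_eq_abs, abs_mul, abs_mul]
        have hs : |Real.sinh (τ * (x₀ - t))| ≤ Real.exp (τ * (t - x₀)) / 2 := by
          have h6 : |Real.sinh (τ * (x₀ - t))| ≤ Real.exp |τ * (x₀ - t)| / 2 := by
            rw [Real.abs_sinh, Real.sinh_eq]
            have := Real.exp_pos (-|τ * (x₀ - t)|); linarith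
          have habs : |τ * (x₀ - t)| = τ * (t - x₀) := by
            rw [abs_of_nonpos (by nlinarith [ht.1.le] : τ * (x₀ - t) ≤ 0)]; ring
          rwa [habs] at h6
        have hφb := hφle t htI
        calc |Real.sinh (τ * (x₀ - t))| * |q t| * |φ t|
            ≤ (Real.exp (τ * (t - x₀)) / 2) * |q t| * (S / τ * Real.exp (τ * (l - t))) := by
              gcongr <;> positivity
          _ = S / (2 * τ) * (Real.exp (τ * (t - x₀)) * Real.exp (τ * (l - t))) * |q t| := by ring
          _ = S / (2 * τ) * Real.exp (τ * (l - x₀)) * |q t| := by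
              rw [← Real.exp_add, show τ * (t - x₀) + τ * (l - t) = τ * (l - x₀) by ring]
      · exact hqabs'.const_mul _
    rw [Real.norm_eq_abs] at key
    calc |∫ t in x₀..l, Real.sinh (τ * (x₀ - t)) * q t * φ t|
        ≤ abs (∫ t in x₀..l, S / (2 * τ) * Real.exp (τ * (l - x₀)) * |q t|) := key
      _ = S / (2 * τ) * Real.exp (τ * (l - x₀)) * ∫ t in x₀..l, |q t| := by
          rw [intervalIntegral.integral_const_mul]
          rw [abs_of_nonneg (by positivity)]
      _ ≤ S / (2 * τ) * Real.exp (τ * (l - x₀)) * Q := by gcongr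
  have hφx₀ := hφ x₀ hx₀
  have hQ0 : 0 ≤ Q := le_trans hQx0 hQx
  have h6 : |φ x₀| ≤ Real.exp (τ * (l - x₀)) / (2 * τ)
      + (1 / τ) * (S / (2 * τ) * Real.exp (τ * (l - x₀)) * Q) := by
    rw [hφx₀]
    have hs0 : |Real.sinh (τ * (x₀ - l))| ≤ Real.exp (τ * (l - x₀)) / 2 := by
      have h7 : |Real.sinh (τ * (x₀ - l))| ≤ Real.exp |τ * (x₀ - l)| / 2 := by
        rw [Real.abs_sinh, Real.sinh_eq]
        have := Real.exp_pos (-|τ * (x₀ - l)|); linarith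
      have habs : |τ * (x₀ - l)| = τ * (l - x₀) := by
        rw [abs_of_nonpos (by nlinarith [hx₀l] : τ * (x₀ - l) ≤ 0)]; ring
      rwa [habs] at h7
    calc |Real.sinh (τ * (x₀ - l)) / τ - (1/τ) * ∫ t in x₀..l, Real.sinh (τ * (x₀ - t)) * q t * φ t|
        ≤ |Real.sinh (τ * (x₀ - l)) / τ|
          + |(1/τ) * ∫ t in x₀..l, Real.sinh (τ * (x₀ - t)) * q t * φ t| := abs_sub _ _
      _ = |Real.sinh (τ * (x₀ - l))| / τ
          + (1/τ) * |∫ t in x₀..l, Real.sinh (τ * (x₀ - t)) * q t * φ t| := by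
          rw [abs_div, abs_mul, abs_of_pos hτ0, abs_of_pos (by positivity : (0:ℝ) < 1/τ)]
      _ ≤ (Real.exp (τ * (l - x₀)) / 2) / τ
          + (1/τ) * (S / (2 * τ) * Real.exp (τ * (l - x₀)) * Q) := by
          gcongr
      _ = Real.exp (τ * (l - x₀)) / (2 * τ)
          + (1 / τ) * (S / (2 * τ) * Real.exp (τ * (l - x₀)) * Q) := by ring
  have hEE' : Real.exp (τ * (x₀ - l)) * Real.exp (τ * (l - x₀)) = 1 := by
    rw [← Real.exp_add, show τ * (x₀ - l) + τ * (l - x₀) = 0 by ring, Real.exp_zero]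
  have h8 : S ≤ τ * Real.exp (τ * (x₀ - l)) * (Real.exp (τ * (l - x₀)) / (2 * τ)
      + (1 / τ) * (S / (2 * τ) * Real.exp (τ * (l - x₀)) * Q)) :=
    mul_le_mul_of_nonneg_left h6 (by positivity)
  have h9 : S ≤ 1/2 + S * Q / (2 * τ) := by
    calc S ≤ _ := h8
      _ = (Real.exp (τ * (x₀ - l)) * Real.exp (τ * (l - x₀))) / 2
          + (Real.exp (τ * (x₀ - l)) * Real.exp (τ * (l - x₀))) * (S * Q) / (2 * τ) := by
          field_simp
      _ = 1/2 + S * Q / (2 * τ) := by rw [hEE']; ring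
  have h10 : S * Q / (2 * τ) ≤ S / 2 := by
    rw [div_le_div_iff₀ (by positivity) (by norm_num : (0:ℝ) < 2)]
    nlinarith
  have hS1 : S ≤ 1 := by linarith
  intro x hx
  calc |φ x| ≤ S / τ * Real.exp (τ * (l - x)) := hφle x hx
    _ ≤ 1 / τ * Real.exp (τ * (l - x)) := by gcongr
    _ = Real.exp (τ * (l - x)) / τ := by ring

private lemma cq_intble (l : ℝ) (hl : 0 < l) (q f c : ℝ → ℝ)
    (hq : IntegrableOn q (Set.Icc 0 l))
    (hf : ContinuousOn f (Set.Icc 0 l)) (hc : Continuous c) :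
    IntervalIntegrable (fun t => c t * q t * f t) volume 0 l := by
  rw [intervalIntegrable_iff_integrableOn_Icc_of_le hl.le]
  have heq : (fun t => c t * q t * f t) = fun t => (c t * f t) * q t := by
    funext t; ring
  rw [heq]
  exact IntegrableOn.continuousOn_mul (hc.continuousOn.mul hf) hq isCompact_Icc

private lemma I_tendsto (l : ℝ) (hl : 0 < l) (q : ℝ → ℝ)
    (hq : IntegrableOn q (Set.Icc 0 l)) :
    Tendsto (fun τ : ℝ => ∫ t in Set.Ioc 0 l, Real.exp (-(2*τ)*t) * |q t|) atTop (nhds 0) := by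
  have hqi : IntegrableOn (fun t => |q t|) (Set.Ioc 0 l) :=
    (hq.mono_set Set.Ioc_subset_Icc_self).abs
  have key := MeasureTheory.tendsto_integral_filter_of_dominated_convergence
      (μ := volume.restrict (Set.Ioc 0 l)) (l := atTop)
      (F := fun (τ : ℝ) (t : ℝ) => Real.exp (-(2*τ)*t) * |q t|)
      (f := fun _ => (0:ℝ)) (fun t => |q t|)
      ?_ ?_ hqi ?_
  · simpa using key
  · filter_upwards with τ
    exact ((Real.continuous_exp.comp (by continuity)).aestronglyMeasurable).mul
      hqi.aestronglyMeasurable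
  · filter_upwards [eventually_ge_atTop (0:ℝ)] with τ hτ
    filter_upwards [ae_restrict_mem measurableSet_Ioc] with t ht
    have h1 : Real.exp (-(2*τ)*t) ≤ 1 := Real.exp_le_one_iff.mpr (by nlinarith [ht.1])
    have h2 : (0:ℝ) < Real.exp (-(2*τ)*t) := Real.exp_pos _
    rw [Real.norm_eq_abs, abs_mul, abs_of_pos h2, abs_abs]
    nlinarith [abs_nonneg (q t)]
  · filter_upwards [ae_restrict_mem measurableSet_Ioc] with t ht
    have h2 : Tendsto (fun τ : ℝ => -(2*τ)*t) atTop atBot := by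
      have h3 : Tendsto (fun τ : ℝ => (2*t)*τ) atTop atTop :=
        Tendsto.const_mul_atTop (by nlinarith [ht.1]) tendsto_id
      have h4 := tendsto_neg_atTop_atBot.comp h3
      convert h4 using 2 with τ; simp [Function.comp]; ring
    have h5 := (Real.tendsto_exp_atBot.comp h2).mul_const |q t|
    simpa using h5

private lemma texp_tendsto (l : ℝ) (hl : 0 < l) :
    Tendsto (fun τ : ℝ => 4 * τ * Real.exp (-(2*τ)*l)) atTop (nhds 0) := by
  have h3 : Tendsto (fun τ : ℝ => 2*l*τ) atTop atTop :=
    Tendsto.const_mul_atTop (by positivity) tendsto_id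
  have h4 := (Real.tendsto_pow_mul_exp_neg_atTop_nhds_zero 1).comp h3
  have h5 := h4.const_mul (2/l)
  simp only [Function.comp] at h5
  rw [mul_zero] at h5
  convert h5 using 2 with τ
  rw [pow_one]
  rw [show -(2*τ)*l = -(2*l*τ) by ring]
  field_simp
  ring

set_option maxHeartbeats 1000000 in
/-- For large `τ`, `φ_τ(0) ≠ 0` and the logarithmic derivative at
the left endpoint satisfies `η_τ(0)/φ_τ(0) = -τ + o(1)` as `τ → +∞`. -/
theorem log_derivative_asymptotics_left (l : ℝ) (hl : 0 < l) (q : ℝ → ℝ)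
    (hq : IntegrableOn q (Set.Icc 0 l)) (φ η : ℝ → ℝ → ℝ)
    (hφcont : ∀ τ > (0:ℝ), ContinuousOn (φ τ) (Set.Icc 0 l))
    (hφ : ∀ τ > (0:ℝ), ∀ x ∈ Set.Icc 0 l,
      φ τ x = Real.sinh (τ * (x - l)) / τ -
        (1 / τ) * ∫ t in x..l, Real.sinh (τ * (x - t)) * q t * φ τ t)
    (hη : ∀ τ > (0:ℝ), ∀ x ∈ Set.Icc 0 l,
      η τ x = Real.cosh (τ * (x - l)) -
        ∫ t in x..l, Real.cosh (τ * (x - t)) * q t * φ τ t) :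
    (∃ τ₀ > (0:ℝ), ∀ τ ≥ τ₀, φ τ 0 ≠ 0) ∧
      Tendsto (fun τ : ℝ => η τ 0 / φ τ 0 + τ) atTop (nhds 0) := by
  set Q : ℝ := ∫ t in (0:ℝ)..l, |q t| with hQdef
  have hQ0 : 0 ≤ Q := intervalIntegral.integral_nonneg hl.le fun t _ => abs_nonneg _
  set τ₀ : ℝ := max (max 1 Q) (max (4*Q) (2/l)) with hτ₀def
  have hτ₀1 : (1:ℝ) ≤ τ₀ := le_trans (le_max_left 1 Q) (le_max_left _ _)
  have hτ₀pos : (0:ℝ) < τ₀ := lt_of_lt_of_le one_pos hτ₀1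
  have h0l : (0:ℝ) ∈ Set.Icc (0:ℝ) l := ⟨le_rfl, hl.le⟩
  -- main per-τ estimates
  have main : ∀ τ : ℝ, τ₀ ≤ τ → φ τ 0 ≠ 0 ∧ |η τ 0 / φ τ 0 + τ|
      ≤ 4 * τ * Real.exp (-(2*τ)*l)
        + 4 * ∫ t in Set.Ioc 0 l, Real.exp (-(2*τ)*t) * |q t| := by
    intro τ hτ
    have hτ1 : (1:ℝ) ≤ τ := le_trans hτ₀1 hτ
    have hτ0 : (0:ℝ) < τ := lt_of_lt_of_le one_pos hτ1
    have hτQ : Q ≤ τ := le_trans (le_trans (le_max_right 1 Q) (le_max_left _ _)) hτ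
    have hτ4Q : 4*Q ≤ τ := le_trans (le_trans (le_max_left (4*Q) (2/l)) (le_max_right _ _)) hτ
    have hτ2l : 2 ≤ τ * l := by
      have h := le_trans (le_trans (le_max_right (4*Q) (2/l)) (le_max_right _ _)) hτ
      rw [div_le_iff₀ hl] at h; linarith [h]
    have hb := phi_exp_bound l hl q hq (φ τ) τ hτ1 hτQ (hφcont τ hτ0) (hφ τ hτ0)
    have hE4 : (4:ℝ) ≤ Real.exp (τ*l) := by
      have h1 := Real.add_one_le_exp (τ*l/2)
      have h2 : Real.exp (τ*l) = Real.exp (τ*l/2) * Real.exp (τ*l/2) := by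
        rw [← Real.exp_add]; ring_nf
      nlinarith [Real.exp_pos (τ*l/2)]
    -- τ * φ τ 0
    have hP : τ * φ τ 0 = Real.sinh (τ*(0-l))
        - ∫ t in (0:ℝ)..l, Real.sinh (τ*(0-t)) * q t * φ τ t := by
      rw [hφ τ hτ0 0 h0l]; field_simp
    -- bound on the sinh-integral
    have hqabs : IntervalIntegrable (fun t => |q t|) volume 0 l := by
      rw [intervalIntegrable_iff_integrableOn_Icc_of_le hl.le]; exact hq.abs
    have hQint0 : (0:ℝ) ≤ Q := hQ0
    have hSb : |∫ t in (0:ℝ)..l, Real.sinh (τ*(0-t)) * q t * φ τ t|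
        ≤ Real.exp (τ*l) / (2*τ) * Q := by
      have key : ‖∫ t in (0:ℝ)..l, Real.sinh (τ*(0-t)) * q t * φ τ t‖
          ≤ abs (∫ t in (0:ℝ)..l, Real.exp (τ*l) / (2*τ) * |q t|) := by
        apply intervalIntegral.norm_integral_le_abs_of_norm_le
        · filter_upwards [ae_restrict_mem measurableSet_uIoc] with t ht
          rw [Set.uIoc_of_le hl.le] at ht
          have htI : t ∈ Set.Icc (0:ℝ) l := ⟨ht.1.le, ht.2⟩
          rw [Real.norm_eq_abs, abs_mul, abs_mul]
          have hs : |Real.sinh (τ*(0-t))| ≤ Real.exp (τ*t) / 2 := by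
            have h6 : |Real.sinh (τ*(0-t))| ≤ Real.exp |τ*(0-t)| / 2 := by
              rw [Real.abs_sinh, Real.sinh_eq]
              have := Real.exp_pos (-|τ*(0-t)|); linarith
            have habs : |τ*(0-t)| = τ*t := by
              rw [abs_of_nonpos (by nlinarith [ht.1.le] : τ*(0-t) ≤ 0)]; ring
            rwa [habs] at h6
          have hφb := hb t htI
          calc |Real.sinh (τ*(0-t))| * |q t| * |φ τ t|
              ≤ (Real.exp (τ*t) / 2) * |q t| * (Real.exp (τ*(l-t)) / τ) := by
                gcongr <;> positivity
            _ = (Real.exp (τ*t) * Real.exp (τ*(l-t))) * |q t| / (2*τ) := by ring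
            _ = Real.exp (τ*l) * |q t| / (2*τ) := by
                rw [← Real.exp_add, show τ*t + τ*(l-t) = τ*l by ring]
            _ = Real.exp (τ*l) / (2*τ) * |q t| := by ring
        · exact hqabs.const_mul _
      rw [Real.norm_eq_abs] at key
      calc |∫ t in (0:ℝ)..l, Real.sinh (τ*(0-t)) * q t * φ τ t|
          ≤ abs (∫ t in (0:ℝ)..l, Real.exp (τ*l) / (2*τ) * |q t|) := key
        _ = Real.exp (τ*l) / (2*τ) * Q := by
            rw [intervalIntegral.integral_const_mul, abs_of_nonneg (by positivity)]
    -- lower bound on |τ * φ τ 0|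
    have hsinheq : |Real.sinh (τ*(0-l))| = Real.sinh (τ*l) := by
      rw [show τ*(0-l) = -(τ*l) by ring, Real.sinh_neg, abs_neg,
        abs_of_pos (Real.sinh_pos_iff.mpr (by positivity))]
    have hFle : Real.exp (-(τ*l)) ≤ 1 := Real.exp_le_one_iff.mpr (by nlinarith)
    have hsv : Real.sinh (τ*l) = (Real.exp (τ*l) - Real.exp (-(τ*l))) / 2 := Real.sinh_eq _
    have hEQ8 : Real.exp (τ*l) * Q / (2*τ) ≤ Real.exp (τ*l) / 8 := by
      rw [div_le_div_iff₀ (by positivity) (by norm_num : (0:ℝ) < 8)]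
      nlinarith [Real.exp_pos (τ*l)]
    have hPlow : Real.exp (τ*l) / 4 ≤ |τ * φ τ 0| := by
      have h11 : |Real.sinh (τ*(0-l))|
          - |∫ t in (0:ℝ)..l, Real.sinh (τ*(0-t)) * q t * φ τ t| ≤ |τ * φ τ 0| := by
        rw [hP]; exact abs_sub_abs_le_abs_sub _ _
      have h12 : Real.exp (τ*l) / 4 ≤ Real.sinh (τ*l) - Real.exp (τ*l) / (2*τ) * Q := by
        have : Real.exp (τ*l) / (2*τ) * Q = Real.exp (τ*l) * Q / (2*τ) := by ring
        rw [this, hsv]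
        nlinarith [hEQ8, hFle, hE4]
      rw [hsinheq] at h11
      linarith [hSb]
    have hφ0lb : Real.exp (τ*l) / (4*τ) ≤ |φ τ 0| := by
      have h13 : |τ * φ τ 0| = τ * |φ τ 0| := by rw [abs_mul, abs_of_pos hτ0]
      rw [h13] at hPlow
      rw [show Real.exp (τ*l) / (4*τ) = (Real.exp (τ*l) / 4) / τ by ring, div_le_iff₀ hτ0]
      linarith [hPlow]
    have hφ0ne : φ τ 0 ≠ 0 := by
      intro h; rw [h, abs_zero] at hφ0lb
      have := div_pos (Real.exp_pos (τ*l)) (by positivity : (0:ℝ) < 4*τ)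
      linarith
    refine ⟨hφ0ne, ?_⟩
    -- numerator identity
    have hcin : Continuous (fun t : ℝ => τ*(0-t)) :=
      continuous_const.mul (continuous_const.sub continuous_id)
    have hi1 : IntervalIntegrable (fun t => Real.cosh (τ*(0-t)) * q t * φ τ t) volume 0 l :=
      cq_intble l hl q (φ τ) (fun t => Real.cosh (τ*(0-t))) hq (hφcont τ hτ0)
        (Real.continuous_cosh.comp hcin)
    have hi2 : IntervalIntegrable (fun t => Real.sinh (τ*(0-t)) * q t * φ τ t) volume 0 l :=
      cq_intble l hl q (φ τ) (fun t => Real.sinh (τ*(0-t))) hq (hφcont τ hτ0)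
        (Real.continuous_sinh.comp hcin)
    have hsum : (∫ t in (0:ℝ)..l, Real.exp (τ*(0-t)) * q t * φ τ t)
        = (∫ t in (0:ℝ)..l, Real.cosh (τ*(0-t)) * q t * φ τ t)
          + ∫ t in (0:ℝ)..l, Real.sinh (τ*(0-t)) * q t * φ τ t := by
      rw [← intervalIntegral.integral_add hi1 hi2]
      apply intervalIntegral.integral_congr
      intro t _
      simp only [← Real.cosh_add_sinh]; ring
    have hN : η τ 0 + τ * φ τ 0 = Real.exp (τ*(0-l))
        - ∫ t in (0:ℝ)..l, Real.exp (τ*(0-t)) * q t * φ τ t := by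
      rw [hη τ hτ0 0 h0l, hP, hsum, ← Real.cosh_add_sinh]; ring
    -- numerator bound
    set I : ℝ := ∫ t in Set.Ioc 0 l, Real.exp (-(2*τ)*t) * |q t| with hIdef
    have hIint : (∫ t in (0:ℝ)..l, Real.exp (-(2*τ)*t) * |q t|) = I := by
      rw [hIdef, intervalIntegral.integral_of_le hl.le]
    have hI0 : 0 ≤ I := by
      rw [← hIint]
      exact intervalIntegral.integral_nonneg hl.le fun t _ => by positivity
    have hqe : IntervalIntegrable (fun t => Real.exp (-(2*τ)*t) * |q t|) volume 0 l := by
      rw [intervalIntegrable_iff_integrableOn_Icc_of_le hl.le]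
      exact IntegrableOn.continuousOn_mul
        ((Real.continuous_exp.comp (continuous_const.mul continuous_id)).continuousOn)
        hq.abs isCompact_Icc
    have hNbint : |∫ t in (0:ℝ)..l, Real.exp (τ*(0-t)) * q t * φ τ t|
        ≤ Real.exp (τ*l) / τ * I := by
      have key : ‖∫ t in (0:ℝ)..l, Real.exp (τ*(0-t)) * q t * φ τ t‖
          ≤ abs (∫ t in (0:ℝ)..l, Real.exp (τ*l) / τ * (Real.exp (-(2*τ)*t) * |q t|)) := by
        apply intervalIntegral.norm_integral_le_abs_of_norm_le
        · filter_upwards [ae_restrict_mem measurableSet_uIoc] with t ht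
          rw [Set.uIoc_of_le hl.le] at ht
          have htI : t ∈ Set.Icc (0:ℝ) l := ⟨ht.1.le, ht.2⟩
          have hφb := hb t htI
          rw [Real.norm_eq_abs, abs_mul, abs_mul, Real.abs_exp]
          calc Real.exp (τ*(0-t)) * |q t| * |φ τ t|
              ≤ Real.exp (τ*(0-t)) * |q t| * (Real.exp (τ*(l-t)) / τ) := by
                gcongr
            _ = (Real.exp (τ*(0-t)) * Real.exp (τ*(l-t))) * |q t| / τ := by ring
            _ = Real.exp (τ*l + -(2*τ)*t) * |q t| / τ := by
                rw [← Real.exp_add, show τ*(0-t) + τ*(l-t) = τ*l + -(2*τ)*t by ring]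
            _ = Real.exp (τ*l) / τ * (Real.exp (-(2*τ)*t) * |q t|) := by
                rw [Real.exp_add]; ring
        · exact hqe.const_mul _
      rw [Real.norm_eq_abs] at key
      calc |∫ t in (0:ℝ)..l, Real.exp (τ*(0-t)) * q t * φ τ t|
          ≤ abs (∫ t in (0:ℝ)..l, Real.exp (τ*l) / τ * (Real.exp (-(2*τ)*t) * |q t|)) := key
        _ = Real.exp (τ*l) / τ * I := by
            rw [intervalIntegral.integral_const_mul, hIint,
              abs_of_nonneg (mul_nonneg (by positivity) hI0)]
    have hNb : |η τ 0 + τ * φ τ 0| ≤ Real.exp (-(τ*l)) + Real.exp (τ*l) / τ * I := by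
      rw [hN]
      calc |Real.exp (τ*(0-l)) - ∫ t in (0:ℝ)..l, Real.exp (τ*(0-t)) * q t * φ τ t|
          ≤ |Real.exp (τ*(0-l))|
            + |∫ t in (0:ℝ)..l, Real.exp (τ*(0-t)) * q t * φ τ t| := abs_sub _ _
        _ ≤ Real.exp (-(τ*l)) + Real.exp (τ*l) / τ * I := by
            rw [Real.abs_exp, show τ*(0-l) = -(τ*l) by ring]
            gcongr
    -- final bound
    have heq : η τ 0 / φ τ 0 + τ = (η τ 0 + τ * φ τ 0) / φ τ 0 := by
      field_simp
    have e1 : Real.exp (-(τ*l)) = Real.exp (-(2*τ)*l) * Real.exp (τ*l) := by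
      rw [← Real.exp_add, show -(2*τ)*l + τ*l = -(τ*l) by ring]
    calc |η τ 0 / φ τ 0 + τ| = |η τ 0 + τ * φ τ 0| / |φ τ 0| := by rw [heq, abs_div]
      _ ≤ |η τ 0 + τ * φ τ 0| / (Real.exp (τ*l) / (4*τ)) :=
          div_le_div_of_nonneg_left (abs_nonneg _) (by positivity) hφ0lb
      _ ≤ (Real.exp (-(τ*l)) + Real.exp (τ*l) / τ * I) / (Real.exp (τ*l) / (4*τ)) := by
          gcongr
      _ = 4 * τ * Real.exp (-(2*τ)*l) + 4 * I := by
          rw [e1]; field_simp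
  refine ⟨⟨τ₀, hτ₀pos, fun τ hτ => (main τ hτ).1⟩, ?_⟩
  apply squeeze_zero_norm' (a := fun τ : ℝ => 4 * τ * Real.exp (-(2*τ)*l)
    + 4 * ∫ t in Set.Ioc 0 l, Real.exp (-(2*τ)*t) * |q t|)
  · filter_upwards [eventually_ge_atTop τ₀] with τ hτ
    rw [Real.norm_eq_abs]
    exact (main τ hτ).2
  · have h1 := texp_tendsto l hl
    have h2 := (I_tendsto l hl q hq).const_mul (4:ℝ)
    rw [mul_zero] at h2
    simpa using h1.add h2
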